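/- Let x be an infinite word that is not ultimately periodic and suppose p(n+1, x) = p(n, x) + 1 for some n ≥ 1. Then the reduced Rauzy graph G'_n(x) has exactly one right-special vertex and exactly one left-special vertex, and either they coincide (yielding an ∞-shape graph with one bi-special vertex and two cycles) or there exists a positive integer d such that G'_{n+d}(x) is of ∞-shape. -/

import Mathlib

open Filter

variable {A : Type*}

/-- The factor of the infinite word `x` of length `n` starting at position `j` (0-indexed). -/
def subwordAt (x : ℕ → A) (j n : ℕ) : List A := (List.range n).map fun i => x (j + i)

/-- `w` is a factor (subword) of the infinite word `x`. -/
def IsFactor (w : List A) (x : ℕ → A) : Prop := ∃ j, subwordAt x j w.length = w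

/-- The subword complexity `p(n, x)`: the number of distinct length-`n` factors of `x`. -/
noncomputable def complexity (x : ℕ → A) (n : ℕ) : ℕ :=
  Set.ncard {w : List A | w.length = n ∧ IsFactor w x}

/-- `x` is ultimately periodic. -/
def UltimatelyPeriodic (x : ℕ → A) : Prop := ∃ N T, 0 < T ∧ ∀ i ≥ N, x (i + T) = x i

/-- `w` is a left-special factor of `x`. -/
def LeftSpecial (w : List A) (x : ℕ → A) : Prop :=
  ∃ a b : A, a ≠ b ∧ IsFactor (a :: w) x ∧ IsFactor (b :: w) x

/-- `w` is a right-special factor of `x`. -/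
def RightSpecial (w : List A) (x : ℕ → A) : Prop :=
  ∃ a b : A, a ≠ b ∧ IsFactor (w ++ [a]) x ∧ IsFactor (w ++ [b]) x

/-- `w` occurs infinitely many times in `x`. -/
def OccursInfinitely (w : List A) (x : ℕ → A) : Prop :=
  {j : ℕ | subwordAt x j w.length = w}.Infinite

/-- `x` is `n`-recurrent: every length-`n` factor occurs infinitely often. -/
def NRecurrent (n : ℕ) (x : ℕ → A) : Prop :=
  ∀ j : ℕ, {i : ℕ | subwordAt x i n = subwordAt x j n}.Infinite

/-- The shift of `x` by `s` places. -/
def shiftWord (x : ℕ → A) (s : ℕ) : ℕ → A := fun i => x (s + i)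

/-- `s_m`: the length of the `m`-th non-recurrent prefix of `x`. -/
noncomputable def srec (x : ℕ → A) (m : ℕ) : ℕ := sInf {s : ℕ | NRecurrent m (shiftWord x s)}

/-- `z_m`: the maximal `m`-recurrent tail of `x`, so that `x = a_m z_m`. -/
noncomputable def ztail (x : ℕ → A) (m : ℕ) : ℕ → A := shiftWord x (srec x m)

/-- The repetition function `r(n, x)`: the least `m ≥ 1` such that
`x_{m+1} … x_{m+n} = x_{i+1} … x_{i+n}` for some `0 ≤ i < m`. -/
noncomputable def repFn (x : ℕ → A) (n : ℕ) : ℕ :=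
  sInf {m : ℕ | 0 < m ∧ ∃ i < m, subwordAt x m n = subwordAt x i n}

/-- A right-special factor `w` is essential if it is a suffix of right-special
factors of every length `m ≥ |w|`. -/
def EssentialRightSpecial (w : List A) (x : ℕ → A) : Prop :=
  RightSpecial w x ∧
    ∀ m, w.length ≤ m → ∃ W : List A, W.length = m ∧ RightSpecial W x ∧ W.drop (m - w.length) = w

/-- `C` is (the word read along) a cycle at `w` in the Rauzy graph `𝒢_n(y)`:
it has length `> n`, prefix `w`, suffix `w`, and is a factor of `y`. -/
def IsCycleAt (y : ℕ → A) (n : ℕ) (w C : List A) : Prop :=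
  n < C.length ∧ C.take n = w ∧ C.drop (C.length - n) = w ∧ IsFactor C y

/-- The Rauzy graph `𝒢_n(y)` is of `∞`-shape with bi-special vertex `w`
and the two (simple) cycles `U` and `V`. -/
def InftyShape (y : ℕ → A) (n : ℕ) (w U V : List A) : Prop :=
  w.length = n ∧ LeftSpecial w y ∧ RightSpecial w y ∧
  (∀ v : List A, v.length = n → IsFactor v y → (LeftSpecial v y ∨ RightSpecial v y) → v = w) ∧
  IsCycleAt y n w U ∧ IsCycleAt y n w V ∧ U ≠ V ∧
  (∀ j, 0 < j → j < U.length - n → (U.drop j).take n ≠ w) ∧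
  (∀ j, 0 < j → j < V.length - n → (V.drop j).take n ≠ w) ∧
  (∀ v : List A, v.length = n → IsFactor v y →
    (∃ j ≤ U.length - n, (U.drop j).take n = v) ∨ (∃ j ≤ V.length - n, (V.drop j).take n = v))

/-- The word read along the concatenated path `U V^b U`, where `U`, `V` are
cycles at a vertex of length `n` (gluing overlaps of length `n`). -/
def cyclePow (n : ℕ) (U V : List A) (b : ℕ) : List A :=
  U ++ (List.replicate b (V.drop n)).flatten ++ U.drop n

/-- The irrationality exponent of a real number, valued in `ℝ≥0∞`. -/
noncomputable def irrationalityExponent (ξ : ℝ) : ENNReal :=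
  ⨆ (μ : ℝ) (_ : {q : ℕ | 0 < q ∧ ∃ p : ℤ, |ξ - p / q| < 1 / (q : ℝ) ^ μ}.Infinite),
    ENNReal.ofReal μ

section Base
namespace RRS

variable {A : Type*}

@[simp] lemma subwordAt_length (x : ℕ → A) (j n : ℕ) : (subwordAt x j n).length = n := by
  simp [subwordAt]

lemma subwordAt_getElem (x : ℕ → A) (j n i : ℕ) (h : i < (subwordAt x j n).length) :
    (subwordAt x j n)[i] = x (j + i) := by
  simp [subwordAt]

lemma subwordAt_eq_iff {x y : ℕ → A} {j j' n : ℕ} :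
    subwordAt x j n = subwordAt y j' n ↔ ∀ i < n, x (j + i) = y (j' + i) := by
  constructor
  · intro h i hi
    have h1 : (subwordAt x j n)[i]'(by simpa using hi) = (subwordAt y j' n)[i]'(by simpa using hi) :=
      List.getElem_of_eq h _
    rwa [subwordAt_getElem, subwordAt_getElem] at h1
  · intro h
    apply List.ext_getElem (by simp)
    intro i h1 h2
    rw [subwordAt_getElem, subwordAt_getElem]
    exact h i (by simpa using h1)

lemma subwordAt_take (x : ℕ → A) (j n i : ℕ) (h : i ≤ n) :
    (subwordAt x j n).take i = subwordAt x j i := by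
  apply List.ext_getElem (by simp [h])
  intro k h1 h2
  rw [List.getElem_take, subwordAt_getElem, subwordAt_getElem]

lemma subwordAt_drop (x : ℕ → A) (j n i : ℕ) :
    (subwordAt x j n).drop i = subwordAt x (j + i) (n - i) := by
  apply List.ext_getElem (by simp)
  intro k h1 h2
  rw [List.getElem_drop, subwordAt_getElem, subwordAt_getElem]
  ring_nf

lemma subwordAt_succ (x : ℕ → A) (j n : ℕ) :
    subwordAt x j (n + 1) = subwordAt x j n ++ [x (j + n)] := by
  simp [subwordAt, List.range_succ]

lemma subwordAt_shift (x : ℕ → A) (s j n : ℕ) :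
    subwordAt (shiftWord x s) j n = subwordAt x (s + j) n := by
  rw [subwordAt_eq_iff]
  intro i hi
  simp [shiftWord, add_assoc]

lemma isFactor_subwordAt (x : ℕ → A) (j n : ℕ) : IsFactor (subwordAt x j n) x :=
  ⟨j, by rw [subwordAt_length]⟩

lemma isFactor_iff {w : List A} {x : ℕ → A} {n : ℕ} (hl : w.length = n) :
    IsFactor w x ↔ ∃ j, subwordAt x j n = w := by
  unfold IsFactor; rw [hl]

/-- helpers about infinite sets of naturals -/
lemma infinite_shift {P : ℕ → Prop} (h : {j | P j}.Infinite) (s : ℕ) :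
    {i | P (s + i)}.Infinite := by
  apply Set.Infinite.of_image (f := fun i => s + i)
  apply Set.Infinite.mono (s := {j | P j} \ Set.Iio s)
  · rintro j ⟨hj, hj2⟩
    simp only [Set.mem_Iio, not_lt] at hj2
    exact ⟨j - s, by simpa [Nat.add_sub_cancel' hj2] using hj, by simp; omega⟩
  · exact h.diff (Set.finite_Iio s)

lemma infinite_shift' {P : ℕ → Prop} {s : ℕ} (h : {i | P (s + i)}.Infinite) :
    {j | P j}.Infinite := by
  apply Set.Infinite.mono (s := (fun i => s + i) '' {i | P (s + i)})
  · rintro j ⟨i, hi, rfl⟩; exact hi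
  · exact Set.Infinite.image (fun a _ b _ h => by omega) h

lemma exists_ge_of_infinite {S : Set ℕ} (h : S.Infinite) (a : ℕ) : ∃ b ∈ S, a ≤ b := by
  obtain ⟨b, hb, hab⟩ := h.exists_gt a
  exact ⟨b, hb, hab.le⟩

end RRS
end Base

section LamSec
namespace RRS

variable {A : Type*}

/-- The set of length-`n` factors of `x`. -/
def Fset (x : ℕ → A) (n : ℕ) : Set (List A) := {w : List A | w.length = n ∧ IsFactor w x}

lemma complexity_eq_ncard (x : ℕ → A) (n : ℕ) : complexity x n = (Fset x n).ncard := rfl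

lemma Fset_finite [Finite A] (x : ℕ → A) (n : ℕ) : (Fset x n).Finite :=
  (List.finite_length_eq A n).subset fun w hw => hw.1

lemma mem_Fset_win (x : ℕ → A) (j n : ℕ) : subwordAt x j n ∈ Fset x n :=
  ⟨subwordAt_length x j n, isFactor_subwordAt x j n⟩

lemma mem_Fset_iff {x : ℕ → A} {n : ℕ} {w : List A} :
    w ∈ Fset x n ↔ w.length = n ∧ ∃ j, subwordAt x j n = w := by
  constructor
  · rintro ⟨hl, hf⟩; exact ⟨hl, (isFactor_iff hl).1 hf⟩
  · rintro ⟨hl, hf⟩; exact ⟨hl, (isFactor_iff hl).2 hf⟩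

lemma Fset_take {x : ℕ → A} {n : ℕ} {w : List A} (hw : w ∈ Fset x (n + 1)) :
    w.take n ∈ Fset x n := by
  obtain ⟨hl, j, hj⟩ := mem_Fset_iff.1 hw
  refine mem_Fset_iff.2 ⟨by simp [hl], ⟨j, ?_⟩⟩
  rw [← hj, subwordAt_take x j (n+1) n (by omega)]

lemma subwordAt_cons (x : ℕ → A) (j n : ℕ) :
    subwordAt x j (n + 1) = x j :: subwordAt x (j + 1) n := by
  apply List.ext_getElem (by simp)
  intro k h1 h2
  match k with
  | 0 => simp [subwordAt_getElem]
  | k + 1 =>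
    simp only [List.getElem_cons_succ]
    rw [subwordAt_getElem, subwordAt_getElem]
    congr 1
    omega

/-- The set of length-`n` recurrent factors of `x`. -/
def Lam (x : ℕ → A) (n : ℕ) : Set (List A) := {w : List A | w.length = n ∧ OccursInfinitely w x}

lemma Lam_mem_iff {x : ℕ → A} {n : ℕ} {w : List A} :
    w ∈ Lam x n ↔ w.length = n ∧ {j | subwordAt x j n = w}.Infinite := by
  unfold Lam OccursInfinitely
  constructor
  · rintro ⟨hl, h⟩; rw [hl] at h; exact ⟨hl, h⟩
  · rintro ⟨hl, h⟩; rw [← hl] at h; exact ⟨hl, h⟩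

lemma Lam_subset_Fset (x : ℕ → A) (n : ℕ) : Lam x n ⊆ Fset x n := by
  rintro w hw
  obtain ⟨hl, hocc⟩ := Lam_mem_iff.1 hw
  obtain ⟨j, hj⟩ := hocc.nonempty
  exact ⟨hl, ⟨j, by rw [hl]; exact hj⟩⟩

lemma Lam_finite [Finite A] (x : ℕ → A) (n : ℕ) : (Lam x n).Finite :=
  (Fset_finite x n).subset (Lam_subset_Fset x n)

lemma Lam_take {x : ℕ → A} {n : ℕ} {w : List A} (hw : w ∈ Lam x (n + 1)) :
    w.take n ∈ Lam x n := by
  obtain ⟨hl, hocc⟩ := Lam_mem_iff.1 hw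
  refine Lam_mem_iff.2 ⟨by simp [hl], ?_⟩
  apply hocc.mono
  intro j hj
  simp only [Set.mem_setOf_eq] at hj ⊢
  rw [← hj, subwordAt_take x j (n+1) n (by omega)]

lemma Lam_drop1 {x : ℕ → A} {n : ℕ} {w : List A} (hw : w ∈ Lam x (n + 1)) :
    w.drop 1 ∈ Lam x n := by
  obtain ⟨hl, hocc⟩ := Lam_mem_iff.1 hw
  refine Lam_mem_iff.2 ⟨by simp [hl], ?_⟩
  apply Set.Infinite.mono (s := (fun j => j + 1) '' {j | subwordAt x j (n+1) = w})
  · rintro i ⟨j, hj, rfl⟩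
    simp only [Set.mem_setOf_eq] at hj ⊢
    rw [← hj, subwordAt_drop]
    norm_num
  · exact Set.Infinite.image (fun a _ b _ h => by omega) hocc

/-- every recurrent factor extends to the right within the recurrent factors -/
lemma Lam_ext_right [Finite A] {x : ℕ → A} {n : ℕ} {u : List A} (hu : u ∈ Lam x n) :
    ∃ a : A, u ++ [a] ∈ Lam x (n + 1) := by
  obtain ⟨hl, hocc⟩ := Lam_mem_iff.1 hu
  by_contra hcon
  push_neg at hcon
  have hfin : ∀ a : A, {j | subwordAt x j n = u ∧ x (j + n) = a}.Finite := by
    intro a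
    by_contra hinf
    have hinf' : {j | subwordAt x j n = u ∧ x (j + n) = a}.Infinite := hinf
    refine hcon a (Lam_mem_iff.2 ⟨by simp [hl], ?_⟩)
    apply hinf'.mono
    rintro j ⟨h1, h2⟩
    simp only [Set.mem_setOf_eq]
    rw [subwordAt_succ, h1, h2]
  refine hocc ?_
  apply Set.Finite.subset (Set.finite_iUnion hfin)
  intro j hj
  exact Set.mem_iUnion.2 ⟨x (j + n), hj, rfl⟩

/-- every recurrent factor extends to the left within the recurrent factors -/
lemma Lam_ext_left [Finite A] {x : ℕ → A} {n : ℕ} {u : List A} (hu : u ∈ Lam x n) :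
    ∃ a : A, a :: u ∈ Lam x (n + 1) := by
  obtain ⟨hl, hocc⟩ := Lam_mem_iff.1 hu
  have hocc' : {j | subwordAt x (j + 1) n = u}.Infinite := by
    apply Set.Infinite.of_image (f := fun j => j + 1)
    apply Set.Infinite.mono (s := {j | subwordAt x j n = u} \ {0})
    · rintro j ⟨hj, hj0⟩
      have hj0' : j ≠ 0 := by simpa using hj0
      refine ⟨j - 1, ?_, by simp; omega⟩
      simp only [Set.mem_setOf_eq]
      rw [Nat.sub_add_cancel (by omega)]
      exact hj
    · exact hocc.diff (Set.finite_singleton 0)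
  by_contra hcon
  push_neg at hcon
  have hfin : ∀ a : A, {j | subwordAt x (j+1) n = u ∧ x j = a}.Finite := by
    intro a
    by_contra hinf
    have hinf' : {j | subwordAt x (j+1) n = u ∧ x j = a}.Infinite := hinf
    refine hcon a (Lam_mem_iff.2 ⟨by simp [hl], ?_⟩)
    apply Set.Infinite.mono (s := (fun j => j) '' {j | subwordAt x (j+1) n = u ∧ x j = a})
    · rintro i ⟨j, ⟨h1, h2⟩, rfl⟩
      simp only [Set.mem_setOf_eq]
      rw [subwordAt_cons, h1, h2]
    · exact Set.Infinite.image (fun a _ b _ h => h) hinf'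
  refine hocc' ?_
  apply Set.Finite.subset (Set.finite_iUnion hfin)
  intro j hj
  exact Set.mem_iUnion.2 ⟨x j, hj, rfl⟩

end RRS
end LamSec

section RecSec
namespace RRS

variable {A : Type*}

lemma exists_nrecurrent [Finite A] (x : ℕ → A) (m : ℕ) :
    ∃ s, NRecurrent m (shiftWord x s) := by
  classical
  set B : Set (List A) := {w ∈ Fset x m | ¬ OccursInfinitely w x} with hB
  have hBfin : B.Finite := (Fset_finite x m).subset fun w hw => hw.1
  have hocc : ∀ w ∈ B, {j | subwordAt x j m = w}.Finite := by
    rintro w ⟨⟨hl, _⟩, h2⟩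
    by_contra hinf
    exact h2 (by rw [OccursInfinitely, hl]; exact hinf)
  have hTfin : (⋃ w ∈ B, {j | subwordAt x j m = w}).Finite := hBfin.biUnion hocc
  obtain ⟨b, hb⟩ := hTfin.bddAbove
  refine ⟨b + 1, ?_⟩
  intro j
  set w := subwordAt x (b + 1 + j) m with hw
  have hwrec : OccursInfinitely w x := by
    by_contra hnot
    have hmem : (b + 1 + j) ∈ ⋃ w ∈ B, {j | subwordAt x j m = w} :=
      Set.mem_biUnion (show w ∈ B from ⟨mem_Fset_win x _ m, hnot⟩) rfl
    have := hb hmem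
    omega
  have hinf : {j' | subwordAt x j' m = w}.Infinite := by
    rw [OccursInfinitely] at hwrec
    rwa [show w.length = m from subwordAt_length _ _ _] at hwrec
  have : {i | subwordAt x (b + 1 + i) m = w}.Infinite := infinite_shift hinf (b+1)
  apply this.mono
  intro i hi
  simp only [Set.mem_setOf_eq] at hi ⊢
  rw [subwordAt_shift, subwordAt_shift, hi]

lemma nrecurrent_ztail [Finite A] (x : ℕ → A) (m : ℕ) : NRecurrent m (ztail x m) :=
  Nat.sInf_mem (exists_nrecurrent x m)

lemma nrec_mono {y : ℕ → A} {m k : ℕ} (h : NRecurrent m y) (hk : k ≤ m) :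
    NRecurrent k y := by
  intro j
  apply (h j).mono
  intro i hi
  simp only [Set.mem_setOf_eq] at hi ⊢
  rw [← subwordAt_take y i m k hk, ← subwordAt_take y j m k hk, hi]

/-- recurrent factors of `x` are exactly the factors of any sufficiently recurrent tail -/
lemma Lam_eq_Fset_ztail [Finite A] (x : ℕ → A) {k m : ℕ} (hk : k ≤ m) :
    Lam x k = Fset (ztail x m) k := by
  ext w
  constructor
  · intro hw
    obtain ⟨hl, hinf⟩ := Lam_mem_iff.1 hw
    obtain ⟨j, hj⟩ := (infinite_shift hinf (srec x m)).nonempty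
    refine mem_Fset_iff.2 ⟨hl, ⟨j, ?_⟩⟩
    rw [ztail, subwordAt_shift]
    exact hj
  · intro hw
    obtain ⟨hl, j, hj⟩ := mem_Fset_iff.1 hw
    have hrec := (nrec_mono (nrecurrent_ztail x m) hk) j
    refine Lam_mem_iff.2 ⟨hl, ?_⟩
    apply infinite_shift' (s := srec x m)
    apply hrec.mono
    intro i hi
    simp only [Set.mem_setOf_eq] at hi ⊢
    rw [← subwordAt_shift x (srec x m) i k, ← ztail, hi, hj]

/-- occurrences of a recurrent factor in any shift are infinite -/
lemma Lam_occ_shift {x : ℕ → A} {k : ℕ} {w : List A} (hw : w ∈ Lam x k) (s : ℕ) :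
    {p | subwordAt (shiftWord x s) p k = w}.Infinite := by
  obtain ⟨hl, hinf⟩ := Lam_mem_iff.1 hw
  have := infinite_shift hinf s
  apply this.mono
  intro p hp
  simp only [Set.mem_setOf_eq] at hp ⊢
  rw [subwordAt_shift]
  exact hp

lemma not_up_shift {x : ℕ → A} (hx : ¬ UltimatelyPeriodic x) (s : ℕ) :
    ¬ UltimatelyPeriodic (shiftWord x s) := by
  intro ⟨N, T, hT, h⟩
  refine hx ⟨s + N, T, hT, ?_⟩
  intro i hi
  have := h (i - s) (by omega)
  simp only [shiftWord] at this
  rw [show s + (i - s + T) = i + T by omega, show s + (i - s) = i by omega] at this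
  exact this

lemma not_up_ztail [Finite A] {x : ℕ → A} (hx : ¬ UltimatelyPeriodic x) (m : ℕ) :
    ¬ UltimatelyPeriodic (ztail x m) := not_up_shift hx _

end RRS
end RecSec

section MHSec
namespace RRS

variable {A : Type*}

lemma sub_one_sum_eq {s : Finset (List A)} {f : List A → ℕ} (hf : ∀ u ∈ s, 1 ≤ f u) :
    ∑ u ∈ s, f u = (∑ u ∈ s, (f u - 1)) + s.card := by
  rw [Finset.card_eq_sum_ones s, ← Finset.sum_add_distrib]
  exact Finset.sum_congr rfl fun u hu => by have := hf u hu; omega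

open Classical in
/-- Morse–Hedlund: complexity of a non-ultimately-periodic word strictly increases -/
lemma mh [Finite A] {y : ℕ → A} (hy : ¬ UltimatelyPeriodic y) (k : ℕ) :
    (Fset y k).ncard < (Fset y (k + 1)).ncard := by
  classical
  set Fk := (Fset_finite y k).toFinset with hFk
  set Fk1 := (Fset_finite y (k+1)).toFinset with hFk1
  have hcard : ∀ m, (Fset y m).ncard = ((Fset_finite y m).toFinset).card := fun m =>
    Set.ncard_eq_toFinset_card _ _
  rw [hcard, hcard, ← hFk, ← hFk1]
  set f : List A → ℕ := fun u => (Fk1.filter (fun w => w.take k = u)).card with hf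
  have hsum : Fk1.card = ∑ u ∈ Fk, f u := by
    apply Finset.card_eq_sum_card_fiberwise
    intro w hw
    simp only [Finset.mem_coe] at hw ⊢
    rw [Set.Finite.mem_toFinset] at hw ⊢
    exact Fset_take hw
  have hge1 : ∀ u ∈ Fk, 1 ≤ f u := by
    intro u hu
    rw [Set.Finite.mem_toFinset] at hu
    obtain ⟨hl, j, hj⟩ := mem_Fset_iff.1 hu
    have hmem : subwordAt y j (k+1) ∈ Fk1.filter (fun w => w.take k = u) := by
      rw [Finset.mem_filter, Set.Finite.mem_toFinset]
      exact ⟨mem_Fset_win y j (k+1), by rw [subwordAt_take y j (k+1) k (by omega)]; exact hj⟩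
    exact Finset.card_pos.2 ⟨_, hmem⟩
  by_contra hcon
  push_neg at hcon
  -- all fibers have exactly one element
  have hone : ∀ u ∈ Fk, f u = 1 := by
    have h0 : ∑ u ∈ Fk, (f u - 1) = 0 := by
      have := sub_one_sum_eq hge1
      omega
    intro u hu
    have := Finset.sum_eq_zero_iff.1 h0 u hu
    have := hge1 u hu
    omega
  -- determinism
  have hdet : ∀ j j', subwordAt y j k = subwordAt y j' k → y (j + k) = y (j' + k) := by
    intro j j' hjj
    set u := subwordAt y j k with hu
    have humem : u ∈ Fk := by rw [Set.Finite.mem_toFinset]; exact mem_Fset_win y j k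
    have hW : subwordAt y j (k+1) ∈ Fk1.filter (fun w => w.take k = u) := by
      rw [Finset.mem_filter, Set.Finite.mem_toFinset]
      exact ⟨mem_Fset_win y j (k+1), by rw [subwordAt_take y j (k+1) k (by omega)]⟩
    have hW' : subwordAt y j' (k+1) ∈ Fk1.filter (fun w => w.take k = u) := by
      rw [Finset.mem_filter, Set.Finite.mem_toFinset]
      refine ⟨mem_Fset_win y j' (k+1), ?_⟩
      rw [subwordAt_take y j' (k+1) k (by omega)]
      exact hjj.symm
    have heq : subwordAt y j (k+1) = subwordAt y j' (k+1) :=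
      Finset.card_le_one.1 (le_of_eq (hone u humem)) _ hW _ hW'
    exact subwordAt_eq_iff.1 heq k (by omega)
  -- pigeonhole on windows
  obtain ⟨i0, j0, hne, hmapeq⟩ :=
    Finite.exists_ne_map_eq_of_infinite (fun (j : ℕ) (i : Fin k) => y (j + i))
  have hwin : ∀ {i j : ℕ}, (fun (i' : Fin k) => y (i + i')) = (fun (i' : Fin k) => y (j + i')) →
      subwordAt y i k = subwordAt y j k := by
    intro i j h
    rw [subwordAt_eq_iff]
    intro l hl
    exact congrFun h ⟨l, hl⟩
  -- wlog i < j
  obtain ⟨i, j, hij, hweq⟩ : ∃ i j, i < j ∧ subwordAt y i k = subwordAt y j k := by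
    rcases Nat.lt_or_ge i0 j0 with h | h
    · exact ⟨i0, j0, h, hwin hmapeq⟩
    · exact ⟨j0, i0, by omega, hwin hmapeq.symm⟩
  -- periodicity
  have key : ∀ t, y (i + t) = y (j + t) := by
    intro t
    induction t using Nat.strong_induction_on with
    | _ t ih =>
      rcases Nat.lt_or_ge t k with ht | ht
      · exact subwordAt_eq_iff.1 hweq t ht
      · have hwt : subwordAt y (i + (t - k)) k = subwordAt y (j + (t - k)) k := by
          rw [subwordAt_eq_iff]
          intro l hl
          have h1 := ih (t - k + l) (by omega)
          rw [show i + (t - k) + l = i + (t - k + l) by omega,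
            show j + (t - k) + l = j + (t - k + l) by omega]
          exact h1
        have := hdet _ _ hwt
        rw [show i + (t - k) + k = i + t by omega, show j + (t - k) + k = j + t by omega] at this
        exact this
  refine hy ⟨i, j - i, by omega, ?_⟩
  intro l hl
  have := key (l - i)
  rw [show i + (l - i) = l by omega, show j + (l - i) = l + (j - i) by omega] at this
  exact this.symm

end RRS
end MHSec

section CountSec
namespace RRS

variable {A : Type*}

lemma eq_append_last {W u : List A} {m : ℕ} (hW : W.length = m + 1) (ht : W.take m = u) :
    ∃ c, W = u ++ [c] := by
  obtain ⟨c, hc⟩ := List.length_eq_one_iff.1 (show (W.drop m).length = 1 by simp [hW])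
  refine ⟨c, ?_⟩
  conv_lhs => rw [← List.take_append_drop m W]
  rw [ht, hc]

lemma eq_cons_head {W : List A} {m : ℕ} (hW : W.length = m + 1) :
    ∃ c, W = c :: W.drop 1 := by
  obtain ⟨c, hc⟩ := List.length_eq_one_iff.1 (show (W.take 1).length = 1 by simp [hW])
  refine ⟨c, ?_⟩
  conv_lhs => rw [← List.take_append_drop 1 W]
  rw [hc, List.singleton_append]

lemma sum_eq_one' {s : Finset (List A)} {f : List A → ℕ} (h : ∑ u ∈ s, f u = 1) :
    ∃ a ∈ s, f a = 1 ∧ ∀ b ∈ s, b ≠ a → f b = 0 := by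
  classical
  have hex : ∃ a ∈ s, f a ≠ 0 := by
    by_contra hc
    push_neg at hc
    rw [Finset.sum_eq_zero hc] at h
    omega
  obtain ⟨a, ha, hfa⟩ := hex
  have hsplit : f a + ∑ u ∈ s.erase a, f u = 1 := by
    rw [Finset.add_sum_erase s f ha]
    exact h
  refine ⟨a, ha, by omega, fun b hb hba => ?_⟩
  have h0 : ∑ u ∈ s.erase a, f u = 0 := by omega
  exact Finset.sum_eq_zero_iff.1 h0 b (Finset.mem_erase.2 ⟨hba, hb⟩)

open Classical in
noncomputable def lamF [Finite A] (x : ℕ → A) (k : ℕ) : Finset (List A) :=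
  (Lam_finite x k).toFinset

lemma mem_lamF [Finite A] {x : ℕ → A} {k : ℕ} {w : List A} :
    w ∈ lamF x k ↔ w ∈ Lam x k := Set.Finite.mem_toFinset _

lemma lam_ncard [Finite A] (x : ℕ → A) (k : ℕ) : (Lam x k).ncard = (lamF x k).card :=
  Set.ncard_eq_toFinset_card _ _

open Classical in
noncomputable def fib [Finite A] (x : ℕ → A) (k : ℕ) (u : List A) : ℕ :=
  ((lamF x (k+1)).filter (fun w => w.take k = u)).card

open Classical in
noncomputable def fibL [Finite A] (x : ℕ → A) (k : ℕ) (u : List A) : ℕ :=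
  ((lamF x (k+1)).filter (fun w => w.drop 1 = u)).card

open Classical in
lemma card_lam_fib [Finite A] (x : ℕ → A) (k : ℕ) :
    (lamF x (k+1)).card = ∑ u ∈ lamF x k, fib x k u := by
  apply Finset.card_eq_sum_card_fiberwise
  intro w hw
  simp only [Finset.mem_coe] at hw ⊢
  rw [mem_lamF] at hw ⊢
  exact Lam_take hw

open Classical in
lemma card_lam_fibL [Finite A] (x : ℕ → A) (k : ℕ) :
    (lamF x (k+1)).card = ∑ u ∈ lamF x k, fibL x k u := by
  apply Finset.card_eq_sum_card_fiberwise
  intro w hw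
  simp only [Finset.mem_coe] at hw ⊢
  rw [mem_lamF] at hw ⊢
  exact Lam_drop1 hw

open Classical in
lemma fib_ge_one [Finite A] {x : ℕ → A} {k : ℕ} {u : List A} (hu : u ∈ lamF x k) :
    1 ≤ fib x k u := by
  rw [mem_lamF] at hu
  obtain ⟨a, ha⟩ := Lam_ext_right hu
  apply Finset.card_pos.2
  refine ⟨u ++ [a], Finset.mem_filter.2 ⟨mem_lamF.2 ha, ?_⟩⟩
  exact List.take_left' hu.1

open Classical in
lemma fibL_ge_one [Finite A] {x : ℕ → A} {k : ℕ} {u : List A} (hu : u ∈ lamF x k) :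
    1 ≤ fibL x k u := by
  rw [mem_lamF] at hu
  obtain ⟨a, ha⟩ := Lam_ext_left hu
  apply Finset.card_pos.2
  exact ⟨a :: u, Finset.mem_filter.2 ⟨mem_lamF.2 ha, by simp⟩⟩

open Classical in
lemma fib_two_of_rs [Finite A] {x : ℕ → A} {k : ℕ} {u : List A} {c d : A} (hcd : c ≠ d)
    (hc : u ++ [c] ∈ Lam x (k+1)) (hd : u ++ [d] ∈ Lam x (k+1)) :
    u ∈ Lam x k ∧ 2 ≤ fib x k u := by
  have hlu : u.length = k := by
    have := hc.1
    simp at this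
    omega
  have humem : u ∈ Lam x k := by
    have := Lam_take hc
    rwa [List.take_left' hlu] at this
  refine ⟨humem, ?_⟩
  apply Finset.one_lt_card.2
  refine ⟨u ++ [c], ?_, u ++ [d], ?_, ?_⟩
  · exact Finset.mem_filter.2 ⟨mem_lamF.2 hc, List.take_left' hlu⟩
  · exact Finset.mem_filter.2 ⟨mem_lamF.2 hd, List.take_left' hlu⟩
  · intro h
    exact hcd (by simpa using List.append_cancel_left h)

open Classical in
lemma fibL_two_of_ls [Finite A] {x : ℕ → A} {k : ℕ} {u : List A} {c d : A} (hcd : c ≠ d)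
    (hc : c :: u ∈ Lam x (k+1)) (hd : d :: u ∈ Lam x (k+1)) :
    u ∈ Lam x k ∧ 2 ≤ fibL x k u := by
  have humem : u ∈ Lam x k := by
    have := Lam_drop1 hc
    simpa using this
  refine ⟨humem, ?_⟩
  apply Finset.one_lt_card.2
  refine ⟨c :: u, ?_, d :: u, ?_, ?_⟩
  · exact Finset.mem_filter.2 ⟨mem_lamF.2 hc, by simp⟩
  · exact Finset.mem_filter.2 ⟨mem_lamF.2 hd, by simp⟩
  · intro h
    exact hcd (by simpa using h)

/-- structure of a level with unique right- and left-special recurrent factors -/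
def GoodLevel (x : ℕ → A) (m : ℕ) (R L : List A) (a b : A) : Prop :=
  R ∈ Lam x m ∧ L ∈ Lam x m ∧ a ≠ b ∧
  R ++ [a] ∈ Lam x (m+1) ∧ R ++ [b] ∈ Lam x (m+1) ∧
  (∀ c, R ++ [c] ∈ Lam x (m+1) → c = a ∨ c = b) ∧
  (∃ c d, c ≠ d ∧ c :: L ∈ Lam x (m+1) ∧ d :: L ∈ Lam x (m+1)) ∧
  (∀ u c d, c ≠ d → u ++ [c] ∈ Lam x (m+1) → u ++ [d] ∈ Lam x (m+1) → u = R) ∧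
  (∀ u c d, c ≠ d → c :: u ∈ Lam x (m+1) → d :: u ∈ Lam x (m+1) → u = L)

open Classical in
lemma goodLevel_of_card [Finite A] {x : ℕ → A} {m : ℕ}
    (h : (Lam x (m+1)).ncard = (Lam x m).ncard + 1) :
    ∃ R L a b, GoodLevel x m R L a b := by
  classical
  rw [lam_ncard, lam_ncard] at h
  -- right side
  have hsum := card_lam_fib x m
  have hS : ∑ u ∈ lamF x m, (fib x m u - 1) = 1 := by
    have := sub_one_sum_eq (s := lamF x m) (f := fib x m) (fun u hu => fib_ge_one hu)
    omega
  obtain ⟨R, hRmem, hR1, hR0⟩ := sum_eq_one' hS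
  have hfibR : fib x m R = 2 := by
    have := fib_ge_one hRmem
    omega
  have hRlam : R ∈ Lam x m := mem_lamF.1 hRmem
  obtain ⟨W1, hW1, W2, hW2, hW12⟩ := Finset.one_lt_card.1 (by omega : 1 < fib x m R)
  obtain ⟨hW1m, hW1t⟩ := Finset.mem_filter.1 hW1
  obtain ⟨hW2m, hW2t⟩ := Finset.mem_filter.1 hW2
  obtain ⟨a, ha⟩ := eq_append_last (mem_lamF.1 hW1m).1 hW1t
  obtain ⟨b, hb⟩ := eq_append_last (mem_lamF.1 hW2m).1 hW2t
  have hab : a ≠ b := by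
    intro hc
    apply hW12
    rw [ha, hb, hc]
  -- left side
  have hsumL := card_lam_fibL x m
  have hSL : ∑ u ∈ lamF x m, (fibL x m u - 1) = 1 := by
    have := sub_one_sum_eq (s := lamF x m) (f := fibL x m) (fun u hu => fibL_ge_one hu)
    omega
  obtain ⟨L, hLmem, hL1, hL0⟩ := sum_eq_one' hSL
  have hLlam : L ∈ Lam x m := mem_lamF.1 hLmem
  obtain ⟨V1, hV1, V2, hV2, hV12⟩ := Finset.one_lt_card.1
    (by have := fibL_ge_one hLmem; omega : 1 < fibL x m L)
  obtain ⟨hV1m, hV1t⟩ := Finset.mem_filter.1 hV1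
  obtain ⟨hV2m, hV2t⟩ := Finset.mem_filter.1 hV2
  obtain ⟨c, hcV⟩ := eq_cons_head (W := V1) (mem_lamF.1 hV1m).1
  obtain ⟨d, hdV⟩ := eq_cons_head (W := V2) (mem_lamF.1 hV2m).1
  rw [hV1t] at hcV
  rw [hV2t] at hdV
  have hcd : c ≠ d := by
    intro hce
    apply hV12
    rw [hcV, hdV, hce]
  refine ⟨R, L, a, b, hRlam, hLlam, hab, ?_, ?_, ?_, ⟨c, d, hcd, ?_, ?_⟩, ?_, ?_⟩
  · rw [← ha]; exact mem_lamF.1 hW1m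
  · rw [← hb]; exact mem_lamF.1 hW2m
  · -- degree exactly two
    intro e he
    have hsub : ({W1, W2} : Finset (List A)) ⊆ (lamF x (m+1)).filter (fun w => w.take m = R) := by
      intro w hw
      rcases Finset.mem_insert.1 hw with rfl | hw
      · exact hW1
      · rw [Finset.mem_singleton.1 hw]; exact hW2
    have hEq : ({W1, W2} : Finset (List A)) = (lamF x (m+1)).filter (fun w => w.take m = R) := by
      apply Finset.eq_of_subset_of_card_le hsub
      rw [show ((lamF x (m+1)).filter (fun w => w.take m = R)).card = 2 from hfibR]
      rw [Finset.card_insert_of_notMem (by simpa using hW12), Finset.card_singleton]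
    have hmem : R ++ [e] ∈ ({W1, W2} : Finset (List A)) := by
      rw [hEq]
      refine Finset.mem_filter.2 ⟨mem_lamF.2 he, List.take_left' hRlam.1⟩
    rcases Finset.mem_insert.1 hmem with h' | h'
    · left
      rw [ha] at h'
      simpa using List.append_cancel_left h'
    · right
      rw [Finset.mem_singleton] at h'
      rw [hb] at h'
      simpa using List.append_cancel_left h'
  · rw [← hcV]; exact mem_lamF.1 hV1m
  · rw [← hdV]; exact mem_lamF.1 hV2m
  · -- uniqueness of right special
    intro u e f hef heu hfu
    obtain ⟨humem, h2⟩ := fib_two_of_rs hef heu hfu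
    by_contra hne
    have := hR0 u (mem_lamF.2 humem) hne
    omega
  · -- uniqueness of left special
    intro u e f hef heu hfu
    obtain ⟨humem, h2⟩ := fibL_two_of_ls hef heu hfu
    by_contra hne
    have := hL0 u (mem_lamF.2 humem) hne
    omega

end RRS
end CountSec

section StepSec
namespace RRS

variable {A : Type*}

open Classical in
lemma card_base [Finite A] {x : ℕ → A} (hx : ¬ UltimatelyPeriodic x) {n : ℕ}
    (hp : complexity x (n+1) = complexity x n + 1) :
    (Lam x (n+1)).ncard = (Lam x n).ncard + 1 := by
  classical
  have hlow : (Lam x n).ncard < (Lam x (n+1)).ncard := by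
    rw [Lam_eq_Fset_ztail x (show n ≤ n+1 by omega),
      Lam_eq_Fset_ztail x (le_refl (n+1))]
    exact mh (not_up_ztail hx (n+1)) n
  set FF : ℕ → Finset (List A) := fun k => (Fset_finite x k).toFinset with hFF
  set fx : List A → ℕ := fun u => ((FF (n+1)).filter (fun w => w.take n = u)).card with hfx
  have hsumx : (FF (n+1)).card = ∑ u ∈ FF n, fx u := by
    apply Finset.card_eq_sum_card_fiberwise
    intro w hw
    simp only [Finset.mem_coe] at hw ⊢
    rw [hFF, Set.Finite.mem_toFinset] at hw ⊢
    exact Fset_take hw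
  have hgex : ∀ u ∈ FF n, 1 ≤ fx u := by
    intro u hu
    rw [hFF, Set.Finite.mem_toFinset] at hu
    obtain ⟨hl, j, hj⟩ := mem_Fset_iff.1 hu
    apply Finset.card_pos.2
    refine ⟨subwordAt x j (n+1), Finset.mem_filter.2 ⟨?_, ?_⟩⟩
    · rw [hFF, Set.Finite.mem_toFinset]; exact mem_Fset_win x j (n+1)
    · rw [subwordAt_take x j (n+1) n (by omega)]; exact hj
  have hcards : (FF (n+1)).card = (FF n).card + 1 := by
    show ((Fset_finite x (n+1)).toFinset).card = ((Fset_finite x n).toFinset).card + 1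
    have h1 := complexity_eq_ncard x (n+1)
    have h2 := complexity_eq_ncard x n
    rw [Set.ncard_eq_toFinset_card _ (Fset_finite x (n+1))] at h1
    rw [Set.ncard_eq_toFinset_card _ (Fset_finite x n)] at h2
    omega
  have hSx : ∑ u ∈ FF n, (fx u - 1) = 1 := by
    have := sub_one_sum_eq hgex
    omega
  have hsub1 : lamF x (n+1) ⊆ FF (n+1) := by
    intro w hw
    rw [mem_lamF] at hw
    rw [hFF, Set.Finite.mem_toFinset]
    exact Lam_subset_Fset _ _ hw
  have hsubn : lamF x n ⊆ FF n := by
    intro w hw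
    rw [mem_lamF] at hw
    rw [hFF, Set.Finite.mem_toFinset]
    exact Lam_subset_Fset _ _ hw
  have hterm : ∀ u ∈ lamF x n, fib x n u - 1 ≤ fx u - 1 := by
    intro u hu
    have : fib x n u ≤ fx u :=
      Finset.card_le_card (Finset.filter_subset_filter _ hsub1)
    omega
  have hcomp : ∑ u ∈ lamF x n, (fib x n u - 1) ≤ 1 := by
    calc ∑ u ∈ lamF x n, (fib x n u - 1) ≤ ∑ u ∈ lamF x n, (fx u - 1) :=
          Finset.sum_le_sum hterm
    _ ≤ ∑ u ∈ FF n, (fx u - 1) := Finset.sum_le_sum_of_subset hsubn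
    _ = 1 := hSx
  have hup : (lamF x (n+1)).card ≤ (lamF x n).card + 1 := by
    have h1 := card_lam_fib x n
    have h2 := sub_one_sum_eq (s := lamF x n) (f := fib x n) (fun u hu => fib_ge_one hu)
    omega
  have e1 := lam_ncard x n
  have e2 := lam_ncard x (n+1)
  omega

open Classical in
lemma card_step [Finite A] {x : ℕ → A} (hx : ¬ UltimatelyPeriodic x) {m : ℕ} {R L : List A}
    {a b : A} (hG : GoodLevel x m R L a b) (hRL : R ≠ L) :
    (Lam x (m+2)).ncard = (Lam x (m+1)).ncard + 1 := by
  classical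
  obtain ⟨hR, hL, hab, hRa, hRb, hdeg, hLs, hRu, hLu⟩ := hG
  have hlow : (Lam x (m+1)).ncard < (Lam x (m+2)).ncard := by
    rw [Lam_eq_Fset_ztail x (show m+1 ≤ m+2 by omega),
      Lam_eq_Fset_ztail x (le_refl (m+2))]
    exact mh (not_up_ztail hx (m+2)) (m+1)
  -- any doubly-extendable (m+1)-word has tail R
  have hform : ∀ v, v ∈ lamF x (m+1) → 2 ≤ fib x (m+1) v → v.drop 1 = R := by
    intro v hv h2
    obtain ⟨W1, hW1, W2, hW2, hW12⟩ := Finset.one_lt_card.1 (by omega : 1 < fib x (m+1) v)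
    obtain ⟨hW1m, hW1t⟩ := Finset.mem_filter.1 hW1
    obtain ⟨hW2m, hW2t⟩ := Finset.mem_filter.1 hW2
    obtain ⟨e, he⟩ := eq_append_last (mem_lamF.1 hW1m).1 hW1t
    obtain ⟨f, hf⟩ := eq_append_last (mem_lamF.1 hW2m).1 hW2t
    have hef : e ≠ f := by
      intro hc
      exact hW12 (by rw [he, hf, hc])
    have hvlen : v.length = m + 1 := (mem_lamF.1 hv).1
    have hW1d : v.drop 1 ++ [e] ∈ Lam x (m+1) := by
      have := Lam_drop1 (mem_lamF.1 hW1m)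
      rwa [he, List.drop_append_of_le_length (by omega)] at this
    have hW2d : v.drop 1 ++ [f] ∈ Lam x (m+1) := by
      have := Lam_drop1 (mem_lamF.1 hW2m)
      rwa [hf, List.drop_append_of_le_length (by omega)] at this
    exact hRu _ _ _ hef hW1d hW2d
  have hbound : ∑ v ∈ lamF x (m+1), (fib x (m+1) v - 1) ≤ 1 := by
    by_cases hex : ∃ v₀ ∈ lamF x (m+1), 2 ≤ fib x (m+1) v₀
    · obtain ⟨v₀, hv₀, h2⟩ := hex
      have hsplit : fib x (m+1) v₀ - 1 + ∑ v ∈ (lamF x (m+1)).erase v₀, (fib x (m+1) v - 1)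
          = ∑ v ∈ lamF x (m+1), (fib x (m+1) v - 1) :=
        Finset.add_sum_erase (lamF x (m+1)) (fun v => fib x (m+1) v - 1) hv₀
      have hrest : ∑ v ∈ (lamF x (m+1)).erase v₀, (fib x (m+1) v - 1) = 0 := by
        apply Finset.sum_eq_zero
        intro v hv
        obtain ⟨hvne, hvm⟩ := Finset.mem_erase.1 hv
        by_contra hc
        have h2v : 2 ≤ fib x (m+1) v := by
          have := fib_ge_one hvm
          omega
        have hd1 := hform v hvm h2v
        have hd0 := hform v₀ hv₀ h2
        obtain ⟨e, he⟩ := eq_cons_head (m := m) (mem_lamF.1 hvm).1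
        obtain ⟨f, hf⟩ := eq_cons_head (m := m) (mem_lamF.1 hv₀).1
        rw [hd1] at he
        rw [hd0] at hf
        have hef : e ≠ f := by
          intro hc'
          exact hvne (by rw [he, hf, hc'])
        have : R = L := by
          apply hLu R e f hef
          · rw [← he]; exact mem_lamF.1 hvm
          · rw [← hf]; exact mem_lamF.1 hv₀
        exact hRL this
      have hv2 : fib x (m+1) v₀ ≤ 2 := by
        have hfibeq : fib x (m+1) v₀
            = ((lamF x (m+2)).filter (fun w => w.take (m+1) = v₀)).card := rfl
        rw [hfibeq]
        have hd0 := hform v₀ hv₀ h2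
        have hsub : (lamF x (m+2)).filter (fun w => w.take (m+1) = v₀)
            ⊆ {v₀ ++ [a], v₀ ++ [b]} := by
          intro W hW
          obtain ⟨hWm, hWt⟩ := Finset.mem_filter.1 hW
          obtain ⟨e, he⟩ := eq_append_last (m := m + 1) (mem_lamF.1 hWm).1 hWt
          have hv₀len : v₀.length = m + 1 := (mem_lamF.1 hv₀).1
          have hWd : R ++ [e] ∈ Lam x (m+1) := by
            have := Lam_drop1 (mem_lamF.1 hWm)
            rwa [he, List.drop_append_of_le_length (by omega), hd0] at this
          rcases hdeg e hWd with rfl | rfl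
          · rw [he]; exact Finset.mem_insert_self _ _
          · rw [he]; exact Finset.mem_insert.2 (Or.inr (Finset.mem_singleton_self _))
        calc ((lamF x (m+2)).filter (fun w => w.take (m+1) = v₀)).card
            ≤ ({v₀ ++ [a], v₀ ++ [b]} : Finset (List A)).card := Finset.card_le_card hsub
        _ ≤ 2 := by
          apply le_trans (Finset.card_insert_le _ _)
          simp
      omega
    · push_neg at hex
      have hz : ∀ v ∈ lamF x (m+1), fib x (m+1) v - 1 = 0 := by
        intro v hv
        have := hex v hv
        omega
      rw [Finset.sum_eq_zero hz]
      omega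
  have hup : (lamF x (m+2)).card ≤ (lamF x (m+1)).card + 1 := by
    have h1 : (lamF x (m+2)).card = ∑ u ∈ lamF x (m+1), fib x (m+1) u := card_lam_fib x (m+1)
    have h2 := sub_one_sum_eq (s := lamF x (m+1)) (f := fib x (m+1))
      (fun u hu => fib_ge_one hu)
    omega
  have e1 := lam_ncard x (m+1)
  have e2 := lam_ncard x (m+2)
  omega

end RRS
end StepSec

section OrbitSec
namespace RRS

variable {A : Type*}

open Classical in
noncomputable def nxt (x : ℕ → A) (m : ℕ) (u : List A) : List A :=
  if h : ∃ W, W ∈ Lam x (m+1) ∧ W.take m = u then h.choose.drop 1 else []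

lemma nxt_spec [Finite A] {x : ℕ → A} {m : ℕ} {u : List A} (hu : u ∈ Lam x m) :
    ∃ W, W ∈ Lam x (m+1) ∧ W.take m = u ∧ nxt x m u = W.drop 1 := by
  obtain ⟨a, ha⟩ := Lam_ext_right hu
  have h : ∃ W, W ∈ Lam x (m+1) ∧ W.take m = u := ⟨u ++ [a], ha, List.take_left' hu.1⟩
  exact ⟨h.choose, h.choose_spec.1, h.choose_spec.2, by rw [nxt, dif_pos h]⟩

lemma nxt_mem [Finite A] {x : ℕ → A} {m : ℕ} {u : List A} (hu : u ∈ Lam x m) :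
    nxt x m u ∈ Lam x m := by
  obtain ⟨W, hW, _, hn⟩ := nxt_spec hu
  rw [hn]
  exact Lam_drop1 hW

lemma nxt_unique [Finite A] {x : ℕ → A} {m : ℕ} {R L : List A} {a b : A}
    (hG : GoodLevel x m R L a b) {u W : List A} (hu : u ∈ Lam x m) (hne : u ≠ R)
    (hW : W ∈ Lam x (m+1)) (ht : W.take m = u) : W.drop 1 = nxt x m u := by
  obtain ⟨W0, hW0, ht0, hn⟩ := nxt_spec hu
  rw [hn]
  by_contra hc
  have hWne : W ≠ W0 := fun hcc => hc (by rw [hcc])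
  obtain ⟨e, he⟩ := eq_append_last hW.1 ht
  obtain ⟨f, hf⟩ := eq_append_last hW0.1 ht0
  have hef : e ≠ f := fun hcc => hWne (by rw [he, hf, hcc])
  exact hne (hG.2.2.2.2.2.2.2.1 u e f hef (he ▸ hW) (hf ▸ hW0))

lemma orb_mem [Finite A] {x : ℕ → A} {m : ℕ} {L : List A} (hL : L ∈ Lam x m) (k : ℕ) :
    (nxt x m)^[k] L ∈ Lam x m := by
  induction k with
  | zero => exact hL
  | succ k ih => rw [Function.iterate_succ_apply']; exact nxt_mem ih

lemma orbit_hits [Finite A] {x : ℕ → A} (hx : ¬ UltimatelyPeriodic x) {m : ℕ} (hm : 1 ≤ m)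
    {R L : List A} {a b : A} (hG : GoodLevel x m R L a b) :
    ∃ k, (nxt x m)^[k] L = R := by
  classical
  by_contra hcon
  push_neg at hcon
  have hL : L ∈ Lam x m := hG.2.1
  have hmem : ∀ k, (nxt x m)^[k] L ∈ Lam x m := orb_mem hL
  -- pigeonhole on the orbit
  have hfin : Finite ↥(Lam x m) := (Lam_finite x m).to_subtype
  obtain ⟨i0, j0, hne, heq⟩ := Finite.exists_ne_map_eq_of_infinite
    (fun k : ℕ => (⟨(nxt x m)^[k] L, hmem k⟩ : ↥(Lam x m)))
  have heq' : (nxt x m)^[i0] L = (nxt x m)^[j0] L := congrArg Subtype.val heq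
  obtain ⟨i, j, hij, hweq⟩ : ∃ i j, i < j ∧ (nxt x m)^[i] L = (nxt x m)^[j] L := by
    rcases Nat.lt_or_ge i0 j0 with h | h
    · exact ⟨i0, j0, h, heq'⟩
    · exact ⟨j0, i0, by omega, heq'.symm⟩
  set z := ztail x (m+1) with hz
  have hwin_mem : ∀ p k, k ≤ m + 1 → subwordAt z p k ∈ Lam x k := by
    intro p k hk
    rw [Lam_eq_Fset_ztail x hk]
    exact mem_Fset_win z p k
  -- find an occurrence of the i-th orbit element in z
  have : (nxt x m)^[i] L ∈ Fset z m := by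
    rw [← Lam_eq_Fset_ztail x (show m ≤ m + 1 by omega)]
    exact hmem i
  obtain ⟨_, p, hp⟩ := mem_Fset_iff.1 this
  -- the windows of z follow the orbit
  have key : ∀ t, subwordAt z (p + t) m = (nxt x m)^[i + t] L := by
    intro t
    induction t with
    | zero => simpa using hp
    | succ t ih =>
      have hW := hwin_mem (p + t) (m+1) le_rfl
      have hWt : (subwordAt z (p + t) (m+1)).take m = (nxt x m)^[i + t] L := by
        rw [subwordAt_take z _ (m+1) m (by omega)]
        exact ih
      have hdrop := nxt_unique hG (hmem (i+t)) (hcon (i+t)) hW hWt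
      rw [subwordAt_drop] at hdrop
      have e1 : p + t + 1 = p + (t+1) := by omega
      have e2 : m + 1 - 1 = m := by omega
      rw [e1, e2] at hdrop
      rw [hdrop, show i + (t + 1) = (i + t) + 1 by omega, Function.iterate_succ_apply']
  -- orbit periodicity
  have hper : ∀ t, (nxt x m)^[i + t] L = (nxt x m)^[j + t] L := by
    intro t
    induction t with
    | zero => simpa using hweq
    | succ t ih =>
      rw [show i + (t + 1) = (i + t) + 1 by omega, show j + (t + 1) = (j + t) + 1 by omega,
        Function.iterate_succ_apply', Function.iterate_succ_apply', ih]
  -- z is ultimately periodic: contradiction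
  have hzper : ∀ t, z (p + t) = z (p + (t + (j - i))) := by
    intro t
    have h1 := key t
    have h2 := key (t + (j - i))
    rw [show i + (t + (j - i)) = j + t by omega, ← hper t, ← h1] at h2
    have := subwordAt_eq_iff.1 h2.symm 0 (by omega)
    simpa using this
  apply not_up_ztail hx (m+1)
  refine ⟨p, j - i, by omega, ?_⟩
  intro l hl
  have h := hzper (l - p)
  rw [show p + (l - p) = l by omega, show p + (l - p + (j - i)) = l + (j - i) by omega] at h
  show z (l + (j - i)) = z l
  exact h.symm

end RRS
end OrbitSec

section SpiralSec
namespace RRS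

variable {A : Type*}

lemma level_up [Finite A] {x : ℕ → A} (hx : ¬ UltimatelyPeriodic x) {m : ℕ} {R L : List A}
    {a b : A} (hG : GoodLevel x m R L a b) {t : ℕ} (hht : (nxt x m)^[t+1] L = R)
    (hbefore : ∀ s ≤ t, (nxt x m)^[s] L ≠ R) :
    ∃ R' L' a' b', GoodLevel x (m+1) R' L' a' b' ∧
      (nxt x (m+1))^[t] L' = R' ∧ (∀ s < t, (nxt x (m+1))^[s] L' ≠ R') := by
  classical
  have hRL : R ≠ L := fun hc => hbefore 0 (by omega) (by simpa using hc.symm)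
  obtain ⟨hR, hL, hab, hRa, hRb, hdeg, hLs, hRu, hLu⟩ := hG
  have hG' : GoodLevel x m R L a b := ⟨hR, hL, hab, hRa, hRb, hdeg, hLs, hRu, hLu⟩
  have hcard : (Lam x (m+1+1)).ncard = (Lam x (m+1)).ncard + 1 := card_step hx hG' hRL
  obtain ⟨R', L', a', b', hGnew⟩ := goodLevel_of_card hcard
  obtain ⟨hR', hL', hab', hRa', hRb', hdeg', hLs', hRu', hLu'⟩ := hGnew
  have hGnew' : GoodLevel x (m+1) R' L' a' b' :=
    ⟨hR', hL', hab', hRa', hRb', hdeg', hLs', hRu', hLu'⟩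
  have hRlen : R.length = m := hR.1
  have hL'len : L'.length = m + 1 := hL'.1
  -- the take-m of L' is left special at level m, hence equals L
  have hL't : L'.take m = L := by
    obtain ⟨c, d, hcd, hcL, hdL⟩ := hLs'
    apply hLu (L'.take m) c d hcd
    · have := Lam_take hcL
      rwa [List.take_succ_cons] at this
    · have := Lam_take hdL
      rwa [List.take_succ_cons] at this
  -- invariant: the level-(m+1) orbit sits above the level-m orbit
  have hinv : ∀ k, k ≤ t → ((nxt x (m+1))^[k] L') ∈ Lam x (m+1) ∧
      ((nxt x (m+1))^[k] L').take m = (nxt x m)^[k] L := by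
    intro k
    induction k with
    | zero => intro _; exact ⟨hL', by simpa using hL't⟩
    | succ k ih =>
      intro hk
      obtain ⟨hVmem, hVt⟩ := ih (by omega)
      set V := (nxt x (m+1))^[k] L' with hV
      have hVd : V.drop 1 = (nxt x m)^[k+1] L := by
        have h1 := nxt_unique hG' (orb_mem hL k) (hbefore k (by omega)) hVmem hVt
        rw [h1, Function.iterate_succ_apply']
      obtain ⟨W, hWmem, hWt, hWn⟩ := nxt_spec hVmem
      constructor
      · rw [Function.iterate_succ_apply', ← hV, hWn]
        exact Lam_drop1 hWmem
      · rw [Function.iterate_succ_apply', ← hV, hWn]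
        have : (W.drop 1).take m = (W.take (1 + m)).drop 1 := List.take_drop
        rw [this, show 1 + m = m + 1 by omega, hWt, hVd]
  -- the drop-1 of the level-(m+1) orbit is one step ahead
  have hdropinv : ∀ k, k ≤ t → ((nxt x (m+1))^[k] L').drop 1 = (nxt x m)^[k+1] L := by
    intro k hk
    obtain ⟨hVmem, hVt⟩ := hinv k hk
    have h1 := nxt_unique hG' (orb_mem hL k) (hbefore k hk) hVmem hVt
    rw [h1, Function.iterate_succ_apply']
  -- the orbit at level m+1 hits R' exactly at time t
  have hVt_mem : ((nxt x (m+1))^[t] L') ∈ Lam x (m+1) := (hinv t le_rfl).1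
  have hVt_drop : ((nxt x (m+1))^[t] L').drop 1 = R := by
    rw [hdropinv t le_rfl]
    exact hht
  obtain ⟨c, hc⟩ := eq_cons_head (m := m) hVt_mem.1
  rw [hVt_drop] at hc
  -- lifting right extensions of R to the vertex c :: R
  have hlift : ∀ e, R ++ [e] ∈ Lam x (m+1) → (c :: R) ++ [e] ∈ Lam x (m+1+1) := by
    intro e he
    obtain ⟨f, hf⟩ := Lam_ext_left he
    have hfR : f :: R ∈ Lam x (m+1) := by
      have := Lam_take hf
      rwa [List.take_succ_cons, List.take_left' hRlen] at this
    have hcR : c :: R ∈ Lam x (m+1) := by rw [← hc]; exact hVt_mem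
    have hfc : f = c := by
      by_contra hne
      exact hRL (hLu R f c hne hfR hcR)
    rw [← hfc]
    simpa using hf
  have hhit : (nxt x (m+1))^[t] L' = R' := by
    rw [hc]
    apply hRu' (c :: R) a b hab
    · exact hlift a hRa
    · exact hlift b hRb
  refine ⟨R', L', a', b', hGnew', hhit, ?_⟩
  intro s hs hcontra
  have h1 : ((nxt x (m+1))^[s] L').drop 1 = (nxt x m)^[s+1] L := hdropinv s (by omega)
  rw [hcontra, ← hhit, hVt_drop] at h1
  exact hbefore (s+1) (by omega) h1.symm

lemma find_bispecial [Finite A] {x : ℕ → A} (hx : ¬ UltimatelyPeriodic x) :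
    ∀ t m (R L : List A) (a b : A), GoodLevel x m R L a b →
      (nxt x m)^[t] L = R → (∀ s < t, (nxt x m)^[s] L ≠ R) →
      ∃ (W : List A) (a' b' : A), GoodLevel x (m+t) W W a' b' := by
  intro t
  induction t with
  | zero =>
    intro m R L a b hG h0 _
    have hLR : L = R := by simpa using h0
    refine ⟨R, a, b, ?_⟩
    rw [show m + 0 = m by omega]
    rw [← hLR] at hG ⊢
    exact hG
  | succ t ih =>
    intro m R L a b hG hh hb
    obtain ⟨R', L', a', b', hG', hh', hb'⟩ :=
      level_up hx hG hh (fun s hs => hb s (by omega))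
    obtain ⟨W, a'', b'', hW⟩ := ih (m+1) R' L' a' b' hG' hh' hb'
    refine ⟨W, a'', b'', ?_⟩
    rw [show m + (t + 1) = m + 1 + t by omega]
    exact hW

end RRS
end SpiralSec

section InftySec
namespace RRS

variable {A : Type*}

lemma subwordAt_getElem? (x : ℕ → A) (j n i : ℕ) (h : i < n) :
    (subwordAt x j n)[i]? = some (x (j + i)) := by
  rw [List.getElem?_eq_getElem (by simpa using h)]
  rw [subwordAt_getElem]

lemma infty_of_bispecial [Finite A] {x : ℕ → A} (hx : ¬ UltimatelyPeriodic x) {m : ℕ}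
    (hm : 1 ≤ m) {w : List A} {a b : A} (hG : GoodLevel x m w w a b) :
    ∃ U V, InftyShape (ztail x (m+1)) m w U V := by
  classical
  set y := ztail x (m+1) with hy
  obtain ⟨hwmem, -, hab, hwa, hwb, hdeg, hLs, hRu, hLu⟩ := hG
  have hwlen : w.length = m := hwmem.1
  have hFs : Lam x m = Fset y m := Lam_eq_Fset_ztail x (by omega)
  have hFs1 : Lam x (m+1) = Fset y (m+1) := Lam_eq_Fset_ztail x le_rfl
  have hwin_mem : ∀ p k, k ≤ m + 1 → subwordAt y p k ∈ Lam x k := by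
    intro p k hk
    rw [Lam_eq_Fset_ztail x hk]
    exact mem_Fset_win y p k
  have hocc : ∀ {v : List A}, v ∈ Lam x m → {p | subwordAt y p m = v}.Infinite := by
    intro v hv
    exact Lam_occ_shift hv (srec x (m+1))
  have hocc1 : ∀ {v : List A}, v ∈ Lam x (m+1) → {p | subwordAt y p (m+1) = v}.Infinite := by
    intro v hv
    exact Lam_occ_shift hv (srec x (m+1))
  -- next occurrence of w after p
  have hNE : ∀ p, {q | p < q ∧ subwordAt y q m = w}.Nonempty := by
    intro p
    obtain ⟨q, hq, hpq⟩ := (hocc hwmem).exists_gt p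
    exact ⟨q, hpq, hq⟩
  set r : ℕ → ℕ := fun p => sInf {q | p < q ∧ subwordAt y q m = w} with hrdef
  have hrmem : ∀ p, p < r p ∧ subwordAt y (r p) m = w := fun p => Nat.sInf_mem (hNE p)
  have hrmin : ∀ p q, p < q → q < r p → subwordAt y q m ≠ w := by
    intro p q h1 h2 hc
    have h8 : r p ≤ q :=
      Nat.sInf_le (show q ∈ {q | p < q ∧ subwordAt y q m = w} from ⟨h1, hc⟩)
    omega
  have hlenC : ∀ p, (subwordAt y p (r p - p + m)).length = r p - p + m := by
    intro p
    simp
  -- the first-return cycles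
  have hcyc : ∀ p, subwordAt y p m = w → IsCycleAt y m w (subwordAt y p (r p - p + m)) := by
    intro p hp
    obtain ⟨hlt, hrw⟩ := hrmem p
    refine ⟨by rw [hlenC]; omega, ?_, ?_, isFactor_subwordAt _ _ _⟩
    · rw [subwordAt_take y p _ m (by omega)]
      exact hp
    · rw [hlenC, show r p - p + m - m = r p - p by omega, subwordAt_drop,
        show p + (r p - p) = r p by omega, show r p - p + m - (r p - p) = m by omega]
      exact hrw
  have hsimp : ∀ p, subwordAt y p m = w → ∀ j, 0 < j →
      j < (subwordAt y p (r p - p + m)).length - m →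
      ((subwordAt y p (r p - p + m)).drop j).take m ≠ w := by
    intro p hp j hj0 hjlt
    rw [hlenC] at hjlt
    rw [subwordAt_drop, subwordAt_take y (p+j) _ m (by omega)]
    exact hrmin p (p+j) (by omega) (by omega)
  -- determinism away from w
  have hdetm : ∀ u, u ∈ Lam x m → u ≠ w → ∀ W W', W ∈ Lam x (m+1) → W' ∈ Lam x (m+1) →
      W.take m = u → W'.take m = u → W = W' := by
    intro u hu hne W W' hW hW' ht ht'
    by_contra hc
    obtain ⟨e, he⟩ := eq_append_last hW.1 ht
    obtain ⟨f, hf⟩ := eq_append_last hW'.1 ht'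
    have hef : e ≠ f := fun hcc => hc (by rw [he, hf, hcc])
    exact hne (hRu u e f hef (he ▸ hW) (hf ▸ hW'))
  have hstep : ∀ p q, subwordAt y p (m+1) = subwordAt y q (m+1) →
      subwordAt y (p+1) m ≠ w → subwordAt y (p+1) (m+1) = subwordAt y (q+1) (m+1) := by
    intro p q hpq hne
    have h2 := congrArg (List.drop 1) hpq
    rw [subwordAt_drop, subwordAt_drop] at h2
    have h1 : subwordAt y (p+1) m = subwordAt y (q+1) m := by simpa using h2
    exact hdetm _ (hwin_mem (p+1) m (by omega)) hne _ _ (hwin_mem (p+1) (m+1) le_rfl)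
      (hwin_mem (q+1) (m+1) le_rfl) (by rw [subwordAt_take y _ (m+1) m (by omega)])
      (by rw [subwordAt_take y _ (m+1) m (by omega)]; exact h1.symm)
  -- window propagation along a return word
  have hclaim : ∀ p q, subwordAt y p m = w → subwordAt y p (m+1) = subwordAt y q (m+1) →
      ∀ k, k < r p - p → subwordAt y (p+k) (m+1) = subwordAt y (q+k) (m+1) := by
    intro p q hp hpq k
    induction k with
    | zero => intro _; simpa using hpq
    | succ k ih =>
      intro hk
      have h1 := ih (by omega)
      have hne : subwordAt y (p+k+1) m ≠ w := hrmin p (p+k+1) (by omega) (by omega)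
      have h2 := hstep (p+k) (q+k) h1 hne
      rw [show p + (k+1) = p + k + 1 by omega, show q + (k+1) = q + k + 1 by omega]
      exact h2
  have hgaple : ∀ p q, subwordAt y p m = w → subwordAt y q m = w →
      subwordAt y p (m+1) = subwordAt y q (m+1) → r q - q ≤ r p - p := by
    intro p q hp hq hpq
    have hpr := (hrmem p).1
    set g := r p - p with hg
    have hg1 : 1 ≤ g := by omega
    have hqg : subwordAt y (q + g) m = w := by
      have h2 := hclaim p q hp hpq (g-1) (by omega)
      have h3 := congrArg (List.drop 1) h2
      rw [subwordAt_drop, subwordAt_drop] at h3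
      rw [show p + (g-1) + 1 = p + g by omega, show q + (g-1) + 1 = q + g by omega,
        show m + 1 - 1 = m by omega] at h3
      rw [← h3, show p + g = r p by omega]
      exact (hrmem p).2
    have h9 : r q ≤ q + g :=
      Nat.sInf_le (show q + g ∈ {q' | q < q' ∧ subwordAt y q' m = w} from ⟨by omega, hqg⟩)
    omega
  -- equal first-return words
  have hgap : ∀ p q, subwordAt y p m = w → subwordAt y q m = w →
      subwordAt y p (m+1) = subwordAt y q (m+1) →
      subwordAt y p (r p - p + m) = subwordAt y q (r q - q + m) := by
    intro p q hp hq hpq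
    have h1 := hgaple p q hp hq hpq
    have h2 := hgaple q p hq hp hpq.symm
    have hgeq : r q - q = r p - p := by omega
    rw [hgeq]
    rw [subwordAt_eq_iff]
    intro i hi
    rcases Nat.lt_or_ge i (m+1) with him | him
    · exact subwordAt_eq_iff.1 hpq i him
    · have hk : i - m < r p - p := by omega
      have h3 := hclaim p q hp hpq (i - m) hk
      have h4 := subwordAt_eq_iff.1 h3 m (by omega)
      rw [show p + (i - m) + m = p + i by omega, show q + (i - m) + m = q + i by omega] at h4
      exact h4
  -- occurrences of the two branches
  have hwin_succ : ∀ p, subwordAt y p (m+1) = subwordAt y p m ++ [y (p+m)] :=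
    fun p => subwordAt_succ y p m
  obtain ⟨p_a, hpa0⟩ := (hocc1 hwa).nonempty
  obtain ⟨p_b, hpb0⟩ := (hocc1 hwb).nonempty
  have hpa : subwordAt y p_a (m+1) = w ++ [a] := hpa0
  have hpb : subwordAt y p_b (m+1) = w ++ [b] := hpb0
  have hpa_m : subwordAt y p_a m = w := by
    have h5 := congrArg (List.take m) hpa
    rwa [subwordAt_take y _ (m+1) m (by omega), List.take_left' hwlen] at h5
  have hpb_m : subwordAt y p_b m = w := by
    have h5 := congrArg (List.take m) hpb
    rwa [subwordAt_take y _ (m+1) m (by omega), List.take_left' hwlen] at h5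
  have hpa_l : y (p_a + m) = a := by
    have h5 := hpa
    rw [hwin_succ p_a, hpa_m] at h5
    simpa using List.append_cancel_left h5
  have hpb_l : y (p_b + m) = b := by
    have h5 := hpb
    rw [hwin_succ p_b, hpb_m] at h5
    simpa using List.append_cancel_left h5
  -- the two cycles differ
  have hUV : subwordAt y p_a (r p_a - p_a + m) ≠ subwordAt y p_b (r p_b - p_b + m) := by
    intro hEq
    have h1 : (subwordAt y p_a (r p_a - p_a + m))[m]? = some (y (p_a + m)) :=
      subwordAt_getElem? y p_a _ m (by have := (hrmem p_a).1; omega)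
    have h2 : (subwordAt y p_b (r p_b - p_b + m))[m]? = some (y (p_b + m)) :=
      subwordAt_getElem? y p_b _ m (by have := (hrmem p_b).1; omega)
    rw [hEq, h2, hpa_l, hpb_l] at h1
    exact hab (Option.some.inj h1).symm
  -- uniqueness of special factors
  have huniq : ∀ v : List A, v.length = m → IsFactor v y →
      (LeftSpecial v y ∨ RightSpecial v y) → v = w := by
    intro v hvlen hvf hs
    rcases hs with ⟨e, f, hef, h1, h2⟩ | ⟨e, f, hef, h1, h2⟩
    · have h1' : e :: v ∈ Lam x (m+1) := by rw [hFs1]; exact ⟨by simp [hvlen], h1⟩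
      have h2' : f :: v ∈ Lam x (m+1) := by rw [hFs1]; exact ⟨by simp [hvlen], h2⟩
      exact hLu v e f hef h1' h2'
    · have h1' : v ++ [e] ∈ Lam x (m+1) := by rw [hFs1]; exact ⟨by simp [hvlen], h1⟩
      have h2' : v ++ [f] ∈ Lam x (m+1) := by rw [hFs1]; exact ⟨by simp [hvlen], h2⟩
      exact hRu v e f hef h1' h2'
  -- coverage
  have hcover : ∀ v : List A, v.length = m → IsFactor v y →
      (∃ j ≤ (subwordAt y p_a (r p_a - p_a + m)).length - m,
        ((subwordAt y p_a (r p_a - p_a + m)).drop j).take m = v) ∨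
      (∃ j ≤ (subwordAt y p_b (r p_b - p_b + m)).length - m,
        ((subwordAt y p_b (r p_b - p_b + m)).drop j).take m = v) := by
    intro v hvlen hvf
    have hvlam : v ∈ Lam x m := by rw [hFs]; exact ⟨hvlen, hvf⟩
    obtain ⟨tt, htt, htp⟩ := exists_ge_of_infinite (hocc hvlam) p_a
    set D := {q | q ≤ tt ∧ subwordAt y q m = w} with hD
    have hDne : D.Nonempty := ⟨p_a, htp, hpa_m⟩
    have hDbdd : BddAbove D := ⟨tt, fun q hq => hq.1⟩
    obtain ⟨hjlt, hjlw⟩ : sSup D ≤ tt ∧ subwordAt y (sSup D) m = w := Nat.sSup_mem hDne hDbdd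
    set jl := sSup D with hjl
    have hmax : ∀ q, q ∈ D → q ≤ jl := fun q hq => le_csSup hDbdd hq
    have hj2 : tt < r jl := by
      by_contra hcc
      push_neg at hcc
      have hmem : r jl ∈ D := ⟨hcc, (hrmem jl).2⟩
      have h6 := hmax _ hmem
      have h7 := (hrmem jl).1
      omega
    have hwinjl : subwordAt y jl (m+1) = w ++ [y (jl + m)] := by
      rw [hwin_succ, hjlw]
    have hwl : w ++ [y (jl + m)] ∈ Lam x (m+1) := by
      rw [← hwinjl]
      exact hwin_mem jl (m+1) le_rfl
    have hcovjl : ∃ j ≤ (subwordAt y jl (r jl - jl + m)).length - m,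
        ((subwordAt y jl (r jl - jl + m)).drop j).take m = v := by
      refine ⟨tt - jl, by rw [hlenC]; omega, ?_⟩
      rw [subwordAt_drop, subwordAt_take y _ _ m (by omega),
        show jl + (tt - jl) = tt by omega]
      exact htt
    rcases hdeg (y (jl + m)) hwl with hca | hcb
    · left
      have heq : subwordAt y jl (m+1) = subwordAt y p_a (m+1) := by
        rw [hwinjl, hca, hpa]
      have hgapeq := hgap jl p_a hjlw hpa_m heq
      rw [← hgapeq]
      exact hcovjl
    · right
      have heq : subwordAt y jl (m+1) = subwordAt y p_b (m+1) := by
        rw [hwinjl, hcb, hpb]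
      have hgapeq := hgap jl p_b hjlw hpb_m heq
      rw [← hgapeq]
      exact hcovjl
  refine ⟨subwordAt y p_a (r p_a - p_a + m), subwordAt y p_b (r p_b - p_b + m),
    hwlen, ?_, ?_, huniq, hcyc p_a hpa_m, hcyc p_b hpb_m, hUV,
    hsimp p_a hpa_m, hsimp p_b hpb_m, hcover⟩
  · obtain ⟨c, d, hcd, hcw, hdw⟩ := hLs
    rw [hFs1] at hcw hdw
    exact ⟨c, d, hcd, hcw.2, hdw.2⟩
  · rw [hFs1] at hwa hwb
    exact ⟨a, b, hab, hwa.2, hwb.2⟩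

end RRS
end InftySec

theorem reduced_rauzy_structure_of_complexity_step {A : Type*} [Fintype A] (x : ℕ → A)
    (n : ℕ) (hn : 1 ≤ n) (hx : ¬ UltimatelyPeriodic x)
    (hp : complexity x (n + 1) = complexity x n + 1) :
    (∃! u : List A, u.length = n ∧ IsFactor u (ztail x (n + 1)) ∧
        RightSpecial u (ztail x (n + 1))) ∧
    (∃! u : List A, u.length = n ∧ IsFactor u (ztail x (n + 1)) ∧
        LeftSpecial u (ztail x (n + 1))) ∧
    ((∃ w U V : List A, InftyShape (ztail x (n + 1)) n w U V) ∨
      (∃ d : ℕ, 0 < d ∧ ∃ w U V : List A,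
        InftyShape (ztail x (n + d + 1)) (n + d) w U V)) := by
  classical
  have hbase := RRS.card_base hx hp
  obtain ⟨R, L, a, b, hG⟩ := RRS.goodLevel_of_card hbase
  obtain ⟨hR, hL, hab, hRa, hRb, hdeg, hLs, hRu, hLu⟩ := hG
  have hG' : RRS.GoodLevel x n R L a b := ⟨hR, hL, hab, hRa, hRb, hdeg, hLs, hRu, hLu⟩
  have hFs : RRS.Lam x n = RRS.Fset (ztail x (n+1)) n := RRS.Lam_eq_Fset_ztail x (by omega)
  have hFs1 : RRS.Lam x (n+1) = RRS.Fset (ztail x (n+1)) (n+1) := RRS.Lam_eq_Fset_ztail x le_rfl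
  refine ⟨⟨R, ⟨hR.1, ?_, ?_⟩, ?_⟩, ⟨L, ⟨hL.1, ?_, ?_⟩, ?_⟩, ?_⟩
  · exact (hFs ▸ hR).2
  · refine ⟨a, b, hab, ?_, ?_⟩
    · exact (hFs1 ▸ hRa).2
    · exact (hFs1 ▸ hRb).2
  · rintro v ⟨hvlen, hvf, hRS⟩
    obtain ⟨e, f, hef, h1, h2⟩ := hRS
    apply hRu v e f hef
    · rw [hFs1]; exact ⟨by simp [hvlen], h1⟩
    · rw [hFs1]; exact ⟨by simp [hvlen], h2⟩
  · exact (hFs ▸ hL).2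
  · obtain ⟨c, d, hcd, h1, h2⟩ := hLs
    exact ⟨c, d, hcd, (hFs1 ▸ h1).2, (hFs1 ▸ h2).2⟩
  · rintro v ⟨hvlen, hvf, hLS⟩
    obtain ⟨e, f, hef, h1, h2⟩ := hLS
    apply hLu v e f hef
    · rw [hFs1]; exact ⟨by simp [hvlen], h1⟩
    · rw [hFs1]; exact ⟨by simp [hvlen], h2⟩
  · have hex : ∃ k, (RRS.nxt x n)^[k] L = R := RRS.orbit_hits hx hn hG'
    have hspec : (RRS.nxt x n)^[Nat.find hex] L = R := Nat.find_spec hex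
    have hmin : ∀ s < Nat.find hex, (RRS.nxt x n)^[s] L ≠ R := fun s hs => Nat.find_min hex hs
    obtain ⟨W, a', b', hW⟩ := RRS.find_bispecial hx (Nat.find hex) n R L a b hG' hspec hmin
    rcases Nat.eq_zero_or_pos (Nat.find hex) with hk | hk
    · left
      rw [hk, Nat.add_zero] at hW
      obtain ⟨U, V, hUV⟩ := RRS.infty_of_bispecial hx hn hW
      exact ⟨W, U, V, hUV⟩
    · right
      refine ⟨Nat.find hex, hk, ?_⟩
      obtain ⟨U, V, hUV⟩ := RRS.infty_of_bispecial hx (show 1 ≤ n + Nat.find hex by omega) hW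
      exact ⟨W, U, V, hUV⟩
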